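/- Let F = ℚ + ℚi + ℚj + ℚk be the rational quaternions with the standard conjugation. Then F is a Pythagorean, formally real *-sfield, but there is no element α ∈ F with α² = 2; in particular, the Hilbert field does not embed into F as a ring. -/

import Mathlib

/-- A subfield `K` of `ℝ` is Pythagorean if for any `a, b ∈ K` there is `c ∈ K`
with `a² + b² = c²`. -/
def PythSubfield (K : Subfield ℝ) : Prop :=
  ∀ a b : ℝ, a ∈ K → b ∈ K → ∃ c ∈ K, a ^ 2 + b ^ 2 = c ^ 2

/-- The Hilbert field: the least (intersection of all) Pythagorean subfield(s) of `ℝ`. -/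
noncomputable def HilbertField : Subfield ℝ :=
  sInf {K : Subfield ℝ | PythSubfield K}

open Quaternion in
lemma exists_normSq_eq (q : ℚ) (hq : 0 ≤ q) : ∃ γ : Quaternion ℚ, normSq γ = q := by
  obtain ⟨a, b, c, d, habcd⟩ := Nat.sum_four_squares (q.num.toNat * q.den)
  refine ⟨⟨(a : ℚ) / q.den, (b : ℚ) / q.den, (c : ℚ) / q.den, (d : ℚ) / q.den⟩, ?_⟩
  have hd : (q.den : ℚ) ≠ 0 := by exact_mod_cast q.den_ne_zero
  rw [Quaternion.normSq_def' (R := ℚ) (a := (⟨(a : ℚ) / q.den, (b : ℚ) / q.den, (c : ℚ) / q.den, (d : ℚ) / q.den⟩ : ℍ[ℚ]))]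
  have : ((a : ℚ) ^ 2 + b ^ 2 + c ^ 2 + d ^ 2) = (q.num.toNat : ℚ) * q.den := by
    exact_mod_cast congrArg (Nat.cast : ℕ → ℚ) habcd
  field_simp
  have hnum : (q.num.toNat : ℚ) = (q.num : ℚ) := by
    exact_mod_cast Int.toNat_of_nonneg (Rat.num_nonneg.mpr hq)
  rw [this, hnum, sq, show (q.den:ℚ) * q.den * q = q * q.den * q.den from by ring,
    Rat.mul_den_eq_num, mul_comm]

lemma sqrt2_mem_pyth (K : Subfield ℝ) (hK : PythSubfield K) : Real.sqrt 2 ∈ K := by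
  obtain ⟨c, hc, hc2⟩ := hK 1 1 K.one_mem K.one_mem
  have h2 : c ^ 2 = 2 := by linarith
  have : Real.sqrt 2 = |c| := by
    rw [← Real.sqrt_sq_eq_abs, h2]
  rw [this]
  rcases abs_choice c with h | h <;> rw [h]
  · exact hc
  · exact K.neg_mem hc

/-- The rational quaternions form a Pythagorean, formally real ⋆-sfield, but contain no
square root of `2`; in particular the Hilbert field does not embed into them as a ring. -/
theorem stmt19 :
    -- Pythagorean
    (∀ α β : Quaternion ℚ, ∃ γ : Quaternion ℚ,
        α * star α + β * star β = γ * star γ) ∧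
    -- formally real
    (∀ (k : ℕ) (a : Fin k → Quaternion ℚ),
        (∑ i, a i * star (a i)) = 0 → ∀ i, a i = 0) ∧
    -- no square root of 2
    (¬ ∃ α : Quaternion ℚ, α ^ 2 = 2) ∧
    -- the Hilbert field does not embed as a ring
    ¬ Nonempty (HilbertField →+* Quaternion ℚ) := by
  have hno2 : ¬ ∃ α : Quaternion ℚ, α ^ 2 = 2 := by
    rintro ⟨α, hα⟩
    have h1 : (α ^ 2).re = 2 := by rw [hα]; rfl
    have h2 : (α ^ 2).imI = 0 := by rw [hα]; rfl
    have h3 : (α ^ 2).imJ = 0 := by rw [hα]; rfl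
    have h4 : (α ^ 2).imK = 0 := by rw [hα]; rfl
    rw [sq] at h1 h2 h3 h4
    simp only [Quaternion.re_mul, Quaternion.imI_mul, Quaternion.imJ_mul,
      Quaternion.imK_mul] at h1 h2 h3 h4
    -- h2: 2 * α.re * α.imI = 0 etc.
    by_cases hre : α.re = 0
    · rw [hre] at h1
      nlinarith [sq_nonneg α.imI, sq_nonneg α.imJ, sq_nonneg α.imK]
    · have hI : α.imI = 0 := by nlinarith
      have hJ : α.imJ = 0 := by nlinarith
      have hK : α.imK = 0 := by nlinarith
      rw [hI, hJ, hK] at h1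
      -- α.re ^ 2 = 2 in ℚ, impossible
      have : ((α.re : ℝ)) ^ 2 = 2 := by push_cast [sq]; exact_mod_cast by linarith [h1]
      have hirr := irrational_sqrt_two
      have : Real.sqrt 2 = |(α.re : ℝ)| := by
        rw [← Real.sqrt_sq_eq_abs, this]
      exact hirr (this ▸ ⟨|α.re|, by push_cast; rfl⟩)
  refine ⟨?_, ?_, hno2, ?_⟩
  · intro α β
    have h := Quaternion.normSq_nonneg (a := α)
    have h' := Quaternion.normSq_nonneg (a := β)
    obtain ⟨γ, hγ⟩ := exists_normSq_eq (Quaternion.normSq α + Quaternion.normSq β)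
      (by positivity)
    refine ⟨γ, ?_⟩
    rw [Quaternion.self_mul_star, Quaternion.self_mul_star, Quaternion.self_mul_star, hγ]
    push_cast
    ring
  · intro k a hsum i
    have hcast : (∑ i, a i * star (a i))
        = algebraMap ℚ (Quaternion ℚ) (∑ i, Quaternion.normSq (a i)) := by
      rw [map_sum]
      exact Finset.sum_congr rfl fun i _ => by
        rw [Quaternion.algebraMap_def]; exact Quaternion.self_mul_star (a i)
    rw [hcast] at hsum
    have hsum' : (∑ i, Quaternion.normSq (a i)) = 0 :=
      (algebraMap ℚ (Quaternion ℚ)).injective (by rw [hsum, map_zero])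
    have := (Finset.sum_eq_zero_iff_of_nonneg (fun i _ => Quaternion.normSq_nonneg)).mp hsum'
      i (Finset.mem_univ i)
    exact Quaternion.normSq_eq_zero.mp this
  · rintro ⟨f⟩
    have hs2 : Real.sqrt 2 ∈ HilbertField := by
      apply Subfield.mem_sInf.mpr
      intro K hK
      exact sqrt2_mem_pyth K hK
    set c : HilbertField := ⟨Real.sqrt 2, hs2⟩
    have hc2 : c ^ 2 = 2 := by
      have h : ((c : ℝ)) ^ 2 = 2 := by
        show (Real.sqrt 2) ^ 2 = 2
        rw [Real.sq_sqrt]; norm_num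
      exact Subtype.ext (by push_cast; exact h)
    apply hno2
    refine ⟨f c, ?_⟩
    rw [← map_pow, hc2, map_ofNat]
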